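/- arXiv:2003.04356 — 2 statements merged into one kernel-verified Lean document; each statement's English description precedes it below -/
import Mathlib

section
/- The BPQM success probability for decoding bit 1 of the 5-bit code equals the Helstrom bound: P_succ = 1 − (p₀² − √(p₀⁴ − (2p₀−1)³))/2, where p₀ = (1 + cos²θ)/2. -/
open Real

/-- BPQM success probability for decoding bit 1 of the 5-bit code equals the
Helstrom bound: with `c = cos θ`, `p₀ = (1 + c²)/2`, and the angle
`φ₀₀^⊛ ∈ [0, π]` given by `cos φ₀₀^⊛ = 4c³/(1+c²)²`, the X-basis measurement on
`Ψ± = p₀²|±φ₀₀^⊛⟩⟨±φ₀₀^⊛| + (1-p₀²)|±⟩⟨±|` succeeds with probability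
`p₀²(1 + sin φ₀₀^⊛)/2 + (1 - p₀²) = 1 - (p₀² - √(p₀⁴ - (2p₀-1)³))/2`. -/
theorem bpqm_bit1_success (θ φ : ℝ) (hθ : θ ∈ Set.Ioo 0 (π / 2)) (hφ : φ ∈ Set.Icc 0 π)
    (hconv : Real.cos φ = 4 * Real.cos θ ^ 3 / (1 + Real.cos θ ^ 2) ^ 2) :
    ∀ p₀ : ℝ, p₀ = (1 + Real.cos θ ^ 2) / 2 →
    p₀ ^ 2 * ((1 + Real.sin φ) / 2) + (1 - p₀ ^ 2)
      = 1 - (p₀ ^ 2 - Real.sqrt (p₀ ^ 4 - (2 * p₀ - 1) ^ 3)) / 2 := by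
  intro p₀ hp₀
  have hsn : 0 ≤ Real.sin φ := Real.sin_nonneg_of_nonneg_of_le_pi hφ.1 hφ.2
  have hsin : Real.sin φ = Real.sqrt (1 - Real.cos φ ^ 2) := by
    rw [show 1 - Real.cos φ ^ 2 = Real.sin φ ^ 2 by
        nlinarith [Real.sin_sq_add_cos_sq φ], Real.sqrt_sq hsn]
  have hd : (1 + Real.cos θ ^ 2) ≠ 0 := by positivity
  have key : p₀ ^ 4 - (2 * p₀ - 1) ^ 3 = (p₀ ^ 2) ^ 2 * (1 - Real.cos φ ^ 2) := by
    subst hp₀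
    rw [hconv]
    field_simp
    ring
  have h : p₀ ^ 2 * Real.sin φ = Real.sqrt (p₀ ^ 4 - (2 * p₀ - 1) ^ 3) := by
    rw [hsin, key, Real.sqrt_mul (sq_nonneg (p₀ ^ 2)), Real.sqrt_sq (sq_nonneg p₀)]
  linear_combination h / 2
end

section
/- For the single-qubit mixtures Ψ± = p₀²|±φ⟩⟨±φ| + (1−p₀²)|±⟩⟨±| with p₀ ∈ [0,1] and φ ∈ [0, π/2], the trace distance is ‖Ψ₊ − Ψ₋‖₁ = 2(1 − p₀²(1 − sin φ)), and the X-basis measurement achieves the corresponding Helstrom success probability. -/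
open Matrix Real ComplexOrder

/-- The qubit state `|φ⟩ = cos(φ/2)|0⟩ + sin(φ/2)|1⟩`; note `|±⟩ = |±(π/2)⟩`. -/
noncomputable def ket (φ : ℝ) : Fin 2 → ℂ :=
  ![(Real.cos (φ / 2) : ℂ), (Real.sin (φ / 2) : ℂ)]

/-- The outer product `|v⟩⟨v|`. -/
def outer {n : Type*} (v : n → ℂ) : Matrix n n ℂ :=
  Matrix.of fun i j => v i * star (v j)

/-- The square root of a positive semidefinite matrix (Mathlib's former `Matrix.PosSemidef.sqrt`). -/
noncomputable def psdSqrt {n : Type*} [Fintype n] [DecidableEq n] {A : Matrix n n ℂ}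
    (hA : A.PosSemidef) : Matrix n n ℂ :=
  hA.1.eigenvectorUnitary.1 * diagonal ((↑) ∘ (√·) ∘ hA.1.eigenvalues) *
    (star hA.1.eigenvectorUnitary : Matrix n n ℂ)

/-- The trace norm `‖M‖₁ = Tr √(MᴴM)`. -/
noncomputable def traceNorm {n : Type*} [Fintype n] [DecidableEq n]
    (M : Matrix n n ℂ) : ℝ :=
  ((psdSqrt (Matrix.posSemidef_conjTranspose_mul_self M)).trace).re

lemma psdSqrt_of_sq_eq {n : Type*} [Fintype n] [DecidableEq n] (a : ℝ) (ha : 0 ≤ a)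
    {A : Matrix n n ℂ} (hA : A.PosSemidef) (hsq : ((a : ℂ) • (1 : Matrix n n ℂ)) ^ 2 = A) :
    ((a : ℂ) • (1 : Matrix n n ℂ)) = psdSqrt hA := by
  have hev : ∀ i, hA.1.eigenvalues i = a ^ 2 := by
    intro i
    have hmv : ∀ v : n → ℂ, A *ᵥ v = ((a : ℂ) ^ 2) • v := by
      intro v; rw [← hsq, smul_pow, one_pow, smul_mulVec, one_mulVec]
    rw [hA.1.eigenvalues_eq i, hmv, dotProduct_smul, dotProduct_comm,
      ← EuclideanSpace.inner_eq_star_dotProduct, inner_self_eq_norm_sq_to_K,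
      hA.1.eigenvectorBasis.orthonormal.1 i]
    simp [← Complex.ofReal_pow]
  unfold psdSqrt
  have hd : diagonal (((↑) ∘ (√·) ∘ hA.1.eigenvalues) : n → ℂ) = (a : ℂ) • 1 := by
    rw [smul_one_eq_diagonal]
    congr 1
    funext i
    simp [hev i, Real.sqrt_sq ha]
  rw [hd, Matrix.mul_smul, Matrix.mul_one, Matrix.smul_mul, Unitary.mul_star_self_of_mem hA.1.eigenvectorUnitary.2]

/-- The mixture `Ψ± = p₀²|±φ⟩⟨±φ| + (1-p₀²)|±⟩⟨±|`. -/
noncomputable def Psi (p₀ φ : ℝ) (s : Bool) : Matrix (Fin 2) (Fin 2) ℂ :=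
  ((p₀ ^ 2 : ℝ) : ℂ) • outer (ket (if s then φ else -φ)) +
    ((1 - p₀ ^ 2 : ℝ) : ℂ) • outer (ket (if s then π / 2 else -(π / 2)))

/-- For the single-qubit mixtures `Ψ±` with `p₀ ∈ [0,1]` and `φ ∈ [0, π/2]`:
`‖Ψ₊ - Ψ₋‖₁ = 2(1 - p₀²(1 - sin φ))`, and the X-basis measurement achieves the
corresponding Helstrom success probability, i.e.
`Tr[Ψ₊|+⟩⟨+|] = p₀²(1 + sin φ)/2 + (1 - p₀²) = 1/2 + (1/4)‖Ψ₊ - Ψ₋‖₁`. -/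
theorem mixture_helstrom (p₀ φ : ℝ) (hp : p₀ ∈ Set.Icc (0 : ℝ) 1)
    (hφ : φ ∈ Set.Icc 0 (π / 2)) :
    traceNorm (Psi p₀ φ true - Psi p₀ φ false)
      = 2 * (1 - p₀ ^ 2 * (1 - Real.sin φ)) ∧
    ((Psi p₀ φ true * outer (ket (π / 2))).trace).re
      = p₀ ^ 2 * ((1 + Real.sin φ) / 2) + (1 - p₀ ^ 2) ∧
    ((Psi p₀ φ true * outer (ket (π / 2))).trace).re
      = 1 / 2 + (1 / 4) * traceNorm (Psi p₀ φ true - Psi p₀ φ false) := by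
  obtain ⟨hp0, hp1⟩ := hp
  obtain ⟨hφ0, hφ1⟩ := hφ
  have h1 : Real.sin φ = 2 * Real.sin (φ/2) * Real.cos (φ/2) := by
    rw [← Real.sin_two_mul]; ring_nf
  have h2 : Real.cos (π/2/2) = Real.sqrt 2 / 2 := by
    rw [show π/2/2 = π/4 by ring, Real.cos_pi_div_four]
  have h3 : Real.sin (π/2/2) = Real.sqrt 2 / 2 := by
    rw [show π/2/2 = π/4 by ring, Real.sin_pi_div_four]
  have h4r : Real.sqrt 2 * Real.sqrt 2 = 2 := Real.mul_self_sqrt (by norm_num)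
  have h4 : (Real.sqrt 2 : ℂ) * (Real.sqrt 2 : ℂ) = 2 := by norm_cast
  have h5 : Real.sin (φ/2)^2 + Real.cos (φ/2)^2 = 1 := Real.sin_sq_add_cos_sq _
  set a : ℝ := 1 - p₀ ^ 2 * (1 - Real.sin φ) with ha_def
  have hsin0 : 0 ≤ Real.sin φ := Real.sin_nonneg_of_nonneg_of_le_pi hφ0
    (hφ1.trans (by linarith [Real.pi_pos]))
  have ha : 0 ≤ a := by nlinarith [Real.sin_le_one φ, sq_nonneg p₀]
  have hD : Psi p₀ φ true - Psi p₀ φ false = ((a : ℝ) : ℂ) • !![0,1;1,0] := by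
    rw [ha_def, h1]
    ext i j
    fin_cases i <;> fin_cases j <;>
      simp [Psi, ket, outer, neg_div, Real.cos_neg, Real.sin_neg, h2, h3,
        Complex.star_def, Complex.conj_ofReal, map_ofNat,
        -Complex.ofReal_cos, -Complex.ofReal_sin] <;>
      linear_combination (((1:ℂ) - (p₀:ℂ)^2)/2) * h4
  have hTN : traceNorm (Psi p₀ φ true - Psi p₀ φ false) = 2 * a := by
    have hXX : (!![0,1;1,0] : Matrix (Fin 2) (Fin 2) ℂ) * !![0,1;1,0] = 1 := by
      ext i j
      fin_cases i <;> fin_cases j <;>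
        simp [Matrix.mul_apply, Fin.sum_univ_two, Matrix.one_apply]
    have hB : Matrix.PosSemidef (((a : ℝ) : ℂ) • (1 : Matrix (Fin 2) (Fin 2) ℂ)) := by
      rw [Matrix.smul_one_eq_diagonal]
      exact Matrix.posSemidef_diagonal_iff.mpr fun i => by
        simpa using Complex.zero_le_real.mpr ha
    have hsq : (((a : ℝ) : ℂ) • (1 : Matrix (Fin 2) (Fin 2) ℂ)) ^ 2
        = (Psi p₀ φ true - Psi p₀ φ false)ᴴ * (Psi p₀ φ true - Psi p₀ φ false) := by
      rw [hD, pow_two, Matrix.conjTranspose_smul, Matrix.smul_mul, Matrix.mul_smul,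
        Matrix.smul_mul, Matrix.mul_smul, Matrix.one_mul, smul_smul, smul_smul]
      have hXH : (!![0,1;1,0] : Matrix (Fin 2) (Fin 2) ℂ)ᴴ = !![0,1;1,0] := by
        ext i j; fin_cases i <;> fin_cases j <;> simp
      rw [hXH, hXX]
      congr 1
      simp [Complex.star_def, Complex.conj_ofReal]
    have := psdSqrt_of_sq_eq a ha (Matrix.posSemidef_conjTranspose_mul_self _) hsq
    rw [traceNorm, ← this, Matrix.trace_smul, Matrix.trace_one]
    simp
    ring
  have hTr : ((Psi p₀ φ true * outer (ket (π / 2))).trace).re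
      = p₀ ^ 2 * ((1 + Real.sin φ) / 2) + (1 - p₀ ^ 2) := by
    rw [h1]
    simp only [Psi, ket, outer, Matrix.trace_fin_two, Matrix.mul_apply, Fin.sum_univ_two,
      Matrix.add_apply, Matrix.smul_apply, Matrix.of_apply, if_true,
      Matrix.cons_val_zero, Matrix.cons_val_one, Matrix.head_cons, smul_eq_mul, h2, h3,
      Complex.star_def, Complex.conj_ofReal]
    push_cast [-Complex.ofReal_cos, -Complex.ofReal_sin]
    rw [show ((Real.sqrt 2 : ℂ) / 2) = ((Real.sqrt 2 / 2 : ℝ) : ℂ) by push_cast; ring]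
    norm_cast
    linear_combination ((1-p₀^2)*(Real.sqrt 2*Real.sqrt 2+2)/4
      + p₀^2*(Real.cos (φ/2)+Real.sin (φ/2))^2/4) * h4r + (p₀^2/2) * h5
  refine ⟨hTN, hTr, ?_⟩
  rw [hTr, hTN]; ring
end
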